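/- Let F : ℝ → ℝ be integrable and continuously differentiable, and let k(x) = e^(2ix)·( 1 + (1/2)·sech²(x/√2) + i·√2·tanh(x/√2) ). Define G : ℝ → ℝ by G(x) = (1/12)·Im( k(x)·∫_{-∞}^{x} conj(k(y))·F(y) dy + conj(k(x))·∫_{x}^{+∞} k(y)·F(y) dy ). Then G is bounded, twice continuously differentiable, and satisfies G''(x) + 4·G(x) + 3·sech²(x/√2)·G(x) = F(x) for all real x. -/

import Mathlib

open MeasureTheory

noncomputable def sech (x : ℝ) : ℝ := 1 / Real.cosh x

noncomputable def kJost (x : ℝ) : ℂ :=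
  Complex.exp (2 * Complex.I * (x : ℂ)) *
    (1 + ((1 / 2 * sech (x / Real.sqrt 2) ^ 2 : ℝ) : ℂ)
      + Complex.I * (Real.sqrt 2 : ℂ) * ((Real.tanh (x / Real.sqrt 2) : ℝ) : ℂ))

noncomputable def Sq (x : ℝ) : ℝ := sech (x / Real.sqrt 2) ^ 2
noncomputable def Th (x : ℝ) : ℝ := Real.tanh (x / Real.sqrt 2)

lemma sqrt2_pos : (0:ℝ) < Real.sqrt 2 := Real.sqrt_pos.2 two_pos
lemma sq_sqrt2 : Real.sqrt 2 ^ 2 = 2 := Real.sq_sqrt two_pos.le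

lemma hasDerivAt_u (x : ℝ) : HasDerivAt (fun x : ℝ => x / Real.sqrt 2) (1 / Real.sqrt 2) x := by
  simpa using (hasDerivAt_id x).div_const (Real.sqrt 2)

lemma hasDerivAt_sech (y : ℝ) :
    HasDerivAt (fun y => sech y) (-(sech y * Real.tanh y)) y := by
  have h := ((Real.hasDerivAt_cosh y).inv (Real.cosh_pos y).ne')
  have heq : -Real.sinh y / Real.cosh y ^ 2 = -(sech y * Real.tanh y) := by
    rw [Real.tanh_eq_sinh_div_cosh, sech]
    field_simp
  simp only [sech, one_div]
  exact h.congr_deriv (by rw [heq, sech, one_div])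

lemma hasDerivAt_Th (x : ℝ) : HasDerivAt Th (Sq x / Real.sqrt 2) x := by
  have hc := (Real.cosh_pos (x / Real.sqrt 2)).ne'
  have h1 : HasDerivAt Real.tanh (sech (x / Real.sqrt 2) ^ 2) (x / Real.sqrt 2) := by
    have h := (Real.hasDerivAt_sinh (x / Real.sqrt 2)).div
      (Real.hasDerivAt_cosh (x / Real.sqrt 2)) hc
    have heq : (Real.cosh (x / Real.sqrt 2) * Real.cosh (x / Real.sqrt 2) -
        Real.sinh (x / Real.sqrt 2) * Real.sinh (x / Real.sqrt 2)) /
        Real.cosh (x / Real.sqrt 2) ^ 2 = sech (x / Real.sqrt 2) ^ 2 := by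
      have h2 := Real.cosh_sq_sub_sinh_sq (x / Real.sqrt 2)
      rw [sech]
      field_simp
      nlinarith [h2]
    have h3 : HasDerivAt (fun y => Real.sinh y / Real.cosh y) (sech (x / Real.sqrt 2) ^ 2)
        (x / Real.sqrt 2) := heq ▸ h
    exact h3.congr_of_eventuallyEq (by
      filter_upwards with y
      rw [Real.tanh_eq_sinh_div_cosh])
  have h4 := h1.comp x (hasDerivAt_u x)
  have : HasDerivAt Th (sech (x / Real.sqrt 2) ^ 2 * (1 / Real.sqrt 2)) x := h4
  convert this using 1
  rw [Sq]; ring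

lemma hasDerivAt_Sq (x : ℝ) : HasDerivAt Sq (-(Real.sqrt 2) * Sq x * Th x) x := by
  have h1 : HasDerivAt (fun y => sech y ^ 2)
      (-(sech (x / Real.sqrt 2) * (sech (x / Real.sqrt 2) * Real.tanh (x / Real.sqrt 2))) +
        -(sech (x / Real.sqrt 2) * (sech (x / Real.sqrt 2) * Real.tanh (x / Real.sqrt 2))))
      (x / Real.sqrt 2) := by
    simpa [pow_two, mul_comm, mul_left_comm, Pi.mul_def] using ((hasDerivAt_sech (x / Real.sqrt 2)).mul
      (hasDerivAt_sech (x / Real.sqrt 2)))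
  have h : HasDerivAt Sq
      ((-(sech (x / Real.sqrt 2) * (sech (x / Real.sqrt 2) * Real.tanh (x / Real.sqrt 2))) +
        -(sech (x / Real.sqrt 2) * (sech (x / Real.sqrt 2) * Real.tanh (x / Real.sqrt 2))))
        * (1 / Real.sqrt 2)) x := by have := h1.comp x (hasDerivAt_u x); exact this
  convert h using 1
  rw [Sq, Th]
  have h2 : (2:ℝ) / Real.sqrt 2 = Real.sqrt 2 := by
    rw [eq_comm, eq_div_iff sqrt2_pos.ne', ← pow_two, sq_sqrt2]
  field_simp
  linear_combination (-(sech (x / Real.sqrt 2) ^ 2 * Real.tanh (x / Real.sqrt 2))) * sq_sqrt2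
-- continuing (concat after p1)
noncomputable def kE (x : ℝ) : ℂ := Complex.exp (2 * Complex.I * (x : ℂ))

lemma hasDerivAt_kE (x : ℝ) : HasDerivAt kE (2 * Complex.I * kE x) x := by
  have h0 : HasDerivAt (fun y : ℝ => ((y : ℝ) : ℂ)) ((1:ℝ)) x := (hasDerivAt_id x).ofReal_comp
  have h1 : HasDerivAt (fun y : ℝ => 2 * Complex.I * (y : ℂ)) (2 * Complex.I) x := by
    simpa using h0.const_mul (2 * Complex.I)
  have h2 := h1.cexp
  have h3 : Complex.exp (2 * Complex.I * (x:ℂ)) * (2 * Complex.I) = 2 * Complex.I * kE x := by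
    rw [kE]; ring
  rw [h3] at h2
  exact h2

lemma hasDerivAt_mk {P Q : ℝ → ℝ} {p q : ℝ} {x : ℝ}
    (hP : HasDerivAt P p x) (hQ : HasDerivAt Q q x) :
    HasDerivAt (fun y => kE y * ((P y : ℂ) + (Q y : ℂ) * Complex.I))
      (kE x * (((p - 2 * Q x : ℝ) : ℂ) + ((2 * P x + q : ℝ) : ℂ) * Complex.I)) x := by
  have h1 : HasDerivAt (fun y => (P y : ℂ) + (Q y : ℂ) * Complex.I)
      ((p : ℂ) + (q : ℂ) * Complex.I) x :=
    (hP.ofReal_comp).add ((hQ.ofReal_comp).mul_const Complex.I)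
  have h := (hasDerivAt_kE x).mul h1
  refine h.congr_deriv ?_
  push_cast
  linear_combination (2 * (Q x : ℂ) * kE x) * Complex.I_sq

lemma kJost_eq (x : ℝ) :
    kJost x = kE x * (((1 + Sq x / 2 : ℝ) : ℂ) + ((Real.sqrt 2 * Th x : ℝ) : ℂ) * Complex.I) := by
  rw [kJost, kE, Sq, Th]
  push_cast
  ring

noncomputable def kd (x : ℝ) : ℂ :=
  kE x * (((-(Real.sqrt 2) / 2 * Sq x * Th x - 2 * Real.sqrt 2 * Th x : ℝ) : ℂ)
    + ((2 + 2 * Sq x : ℝ) : ℂ) * Complex.I)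

noncomputable def kdd (x : ℝ) : ℂ :=
  kE x * (((Sq x * Th x ^ 2 - Sq x ^ 2 / 2 - 6 * Sq x - 4 : ℝ) : ℂ)
    + ((-3 * Real.sqrt 2 * Sq x * Th x - 4 * Real.sqrt 2 * Th x : ℝ) : ℂ) * Complex.I)

lemma hasDerivAt_kJost (x : ℝ) : HasDerivAt kJost (kd x) x := by
  have hP : HasDerivAt (fun y => 1 + Sq y / 2) (-(Real.sqrt 2) * Sq x * Th x / 2) x :=
    (hasDerivAt_Sq x).div_const 2 |>.const_add 1
  have hQ : HasDerivAt (fun y => Real.sqrt 2 * Th y) (Real.sqrt 2 * (Sq x / Real.sqrt 2)) x :=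
    (hasDerivAt_Th x).const_mul (Real.sqrt 2)
  have h := hasDerivAt_mk hP hQ
  have he : (fun y => kE y * (((1 + Sq y / 2 : ℝ) : ℂ) + ((Real.sqrt 2 * Th y : ℝ) : ℂ) * Complex.I)) = kJost := by
    funext y; rw [kJost_eq]
  rw [he] at h
  convert h using 1
  rw [kd]
  push_cast
  have h2 : ((Real.sqrt 2:ℝ):ℂ) ≠ 0 := by exact_mod_cast sqrt2_pos.ne'
  field_simp
  ring
lemma hasDerivAt_kd (x : ℝ) : HasDerivAt kd (kdd x) x := by
  have hST : HasDerivAt (fun y => Sq y * Th y)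
      ((-(Real.sqrt 2) * Sq x * Th x) * Th x + Sq x * (Sq x / Real.sqrt 2)) x :=
    (hasDerivAt_Sq x).mul (hasDerivAt_Th x)
  have hR : HasDerivAt (fun y => -(Real.sqrt 2) / 2 * Sq y * Th y - 2 * Real.sqrt 2 * Th y)
      (-(Real.sqrt 2) / 2 * ((-(Real.sqrt 2) * Sq x * Th x) * Th x + Sq x * (Sq x / Real.sqrt 2))
        - 2 * Real.sqrt 2 * (Sq x / Real.sqrt 2)) x := by
    have h := (hST.const_mul (-(Real.sqrt 2) / 2)).sub
      ((hasDerivAt_Th x).const_mul (2 * Real.sqrt 2))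
    exact h.congr_of_eventuallyEq (Filter.Eventually.of_forall fun y => by simp only [Pi.sub_apply]; ring)
  have hM : HasDerivAt (fun y => 2 + 2 * Sq y) (2 * (-(Real.sqrt 2) * Sq x * Th x)) x :=
    ((hasDerivAt_Sq x).const_mul 2).const_add 2
  have h := hasDerivAt_mk hR hM
  have he : kd = (fun y => kE y * (((-(Real.sqrt 2) / 2 * Sq y * Th y - 2 * Real.sqrt 2 * Th y : ℝ) : ℂ)
      + ((2 + 2 * Sq y : ℝ) : ℂ) * Complex.I)) := rfl
  rw [he]
  convert h using 1
  rw [kdd]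
  push_cast
  have h2 : ((Real.sqrt 2:ℝ):ℂ) ≠ 0 := by exact_mod_cast sqrt2_pos.ne'
  have hs2 : ((Real.sqrt 2:ℝ):ℂ) ^ 2 = 2 := by exact_mod_cast sq_sqrt2
  field_simp
  linear_combination (-(kE x * (Sq x:ℂ) * (Th x:ℂ)^2)) * hs2

lemma th_sq (x : ℝ) : Th x ^ 2 = 1 - Sq x := by
  rw [Th, Sq, Real.tanh_eq_sinh_div_cosh, sech]
  have h := Real.cosh_sq_sub_sinh_sq (x / Real.sqrt 2)
  have hc := (Real.cosh_pos (x / Real.sqrt 2)).ne'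
  field_simp
  nlinarith [h]

lemma kdd_eq (x : ℝ) : kdd x = -((4:ℂ) + 3 * (Sq x : ℂ)) * kJost x := by
  rw [kdd, kJost_eq]
  have ht : ((Th x : ℝ) : ℂ) ^ 2 = 1 - ((Sq x : ℝ) : ℂ) := by exact_mod_cast th_sq x
  push_cast
  linear_combination (kE x * (Sq x : ℂ)) * ht

lemma wronskian (x : ℝ) :
    kd x * (starRingEnd ℂ) (kJost x) - (starRingEnd ℂ) (kd x) * kJost x = 12 * Complex.I := by
  have hE : kE x * (starRingEnd ℂ) (kE x) = 1 := by
    have h0 : (2*Complex.I*(x:ℂ)) + (starRingEnd ℂ) (2*Complex.I*(x:ℂ)) = 0 := by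
      simp only [map_mul, Complex.conj_I, Complex.conj_ofReal, map_ofNat]
      ring
    rw [kE, ← Complex.exp_conj, ← Complex.exp_add, h0, Complex.exp_zero]
  have ht : ((Th x : ℝ) : ℂ) ^ 2 = 1 - ((Sq x : ℝ) : ℂ) := by exact_mod_cast th_sq x
  have hs2 : ((Real.sqrt 2:ℝ):ℂ) ^ 2 = 2 := by exact_mod_cast sq_sqrt2
  rw [kd, kJost_eq]
  simp only [map_mul, map_add, Complex.conj_ofReal, Complex.conj_I]
  push_cast
  linear_combination (12 * Complex.I) * hE
    + (2 * Complex.I * (kE x * (starRingEnd ℂ) (kE x)) * ((Th x:ℂ)^2 * ((Sq x:ℂ)/2 + 2))) * hs2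
    + (2 * Complex.I * (kE x * (starRingEnd ℂ) (kE x)) * ((Sq x:ℂ) + 4)) * ht
lemma continuous_Sq : Continuous Sq :=
  continuous_iff_continuousAt.2 fun x => (hasDerivAt_Sq x).continuousAt

lemma continuous_Th : Continuous Th :=
  continuous_iff_continuousAt.2 fun x => (hasDerivAt_Th x).continuousAt

lemma continuous_kE : Continuous kE :=
  continuous_iff_continuousAt.2 fun x => (hasDerivAt_kE x).continuousAt

lemma continuous_kJost : Continuous kJost :=
  continuous_iff_continuousAt.2 fun x => (hasDerivAt_kJost x).continuousAt

lemma continuous_kd : Continuous kd :=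
  continuous_iff_continuousAt.2 fun x => (hasDerivAt_kd x).continuousAt

lemma continuous_kdd : Continuous kdd := by
  unfold kdd
  refine continuous_kE.mul (Continuous.add ?_ (Continuous.mul ?_ continuous_const)) <;>
    exact Complex.continuous_ofReal.comp (by
      first
      | exact (((continuous_Sq.mul (continuous_Th.pow 2)).sub
          ((continuous_Sq.pow 2).div_const 2)).sub
          (continuous_const.mul continuous_Sq)).sub continuous_const
      | exact ((continuous_const.mul continuous_Sq).mul continuous_Th).sub
          (continuous_const.mul continuous_Th))

lemma Sq_nonneg (x : ℝ) : 0 ≤ Sq x := sq_nonneg _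

lemma Sq_le_one (x : ℝ) : Sq x ≤ 1 := by
  rw [Sq, sech]
  have h := Real.one_le_cosh (x / Real.sqrt 2)
  rw [pow_two]
  have h1 : 1 / Real.cosh (x / Real.sqrt 2) ≤ 1 := by
    rw [div_le_one (by positivity)]; exact h
  have h0 : 0 ≤ 1 / Real.cosh (x / Real.sqrt 2) := by positivity
  nlinarith

lemma abs_Th_le (x : ℝ) : |Th x| ≤ 1 := by
  rw [Th, Real.tanh_eq_sinh_div_cosh, abs_div, abs_of_pos (Real.cosh_pos _),
    div_le_one (Real.cosh_pos _), abs_le]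
  constructor <;>
    nlinarith [Real.cosh_sq_sub_sinh_sq (x / Real.sqrt 2), Real.cosh_pos (x / Real.sqrt 2),
      sq_nonneg (Real.sinh (x / Real.sqrt 2) - Real.cosh (x / Real.sqrt 2)),
      sq_nonneg (Real.sinh (x / Real.sqrt 2) + Real.cosh (x / Real.sqrt 2))]

lemma norm_kE (x : ℝ) : ‖kE x‖ = 1 := by
  rw [kE, Complex.norm_exp]
  simp

lemma sqrt2_le : Real.sqrt 2 ≤ 3 / 2 := by
  nlinarith [sq_sqrt2, sqrt2_pos]

lemma norm_kJost_le (x : ℝ) : ‖kJost x‖ ≤ 3 := by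
  rw [kJost_eq, norm_mul, norm_kE, one_mul]
  calc ‖((1 + Sq x / 2 : ℝ) : ℂ) + ((Real.sqrt 2 * Th x : ℝ) : ℂ) * Complex.I‖
      ≤ ‖((1 + Sq x / 2 : ℝ) : ℂ)‖ + ‖((Real.sqrt 2 * Th x : ℝ) : ℂ) * Complex.I‖ :=
        norm_add_le _ _
    _ = |1 + Sq x / 2| + |Real.sqrt 2 * Th x| := by
        rw [norm_mul, Complex.norm_I, mul_one, Complex.norm_real, Complex.norm_real]
        rfl
    _ ≤ 3 := by
        rw [abs_mul, abs_of_pos sqrt2_pos, abs_of_nonneg (by nlinarith [Sq_nonneg x])]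
        nlinarith [Sq_le_one x, abs_Th_le x, sqrt2_le, abs_nonneg (Th x), sqrt2_pos]
theorem variation_of_parameters_solution
    (F : ℝ → ℝ) (hF : Integrable F) (hF1 : ContDiff ℝ 1 F)
    (G : ℝ → ℝ)
    (hG : ∀ x : ℝ, G x = (1 / 12) *
      (kJost x * (∫ y in Set.Iic x, (starRingEnd ℂ) (kJost y) * (F y : ℂ))
        + (starRingEnd ℂ) (kJost x) * (∫ y in Set.Ici x, kJost y * (F y : ℂ))).im) :
    (∃ M : ℝ, ∀ x : ℝ, |G x| ≤ M) ∧
    ContDiff ℝ 2 G ∧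
    (∀ x : ℝ, deriv (deriv G) x + 4 * G x + 3 * sech (x / Real.sqrt 2) ^ 2 * G x = F x) := by
  have hFcont : Continuous F := hF1.continuous
  set f : ℝ → ℂ := fun y => (starRingEnd ℂ) (kJost y) * (F y : ℂ) with hf_def
  set g : ℝ → ℂ := fun y => kJost y * (F y : ℂ) with hg_def
  have hfc : Continuous f :=
    (continuous_star.comp continuous_kJost).mul (Complex.continuous_ofReal.comp hFcont)
  have hgc : Continuous g :=
    continuous_kJost.mul (Complex.continuous_ofReal.comp hFcont)
  have hFC : Integrable (fun y => (F y : ℂ)) := hF.ofReal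
  have hf : Integrable f := hFC.bdd_mul
    ((continuous_star.comp continuous_kJost).aestronglyMeasurable)
    (c := 3) (ae_of_all _ fun y => by
      calc ‖(starRingEnd ℂ) (kJost y)‖ = ‖kJost y‖ := RCLike.norm_conj _
      _ ≤ 3 := norm_kJost_le y)
  have hg : Integrable g := hFC.bdd_mul continuous_kJost.aestronglyMeasurable
    (c := 3) (ae_of_all _ fun y => norm_kJost_le y)
  set A : ℝ → ℂ := fun x => ∫ y in Set.Iic x, f y with hA_def
  set B : ℝ → ℂ := fun x => ∫ y in Set.Ici x, g y with hB_def
  have hA : ∀ x, HasDerivAt A (f x) x := by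
    intro x
    have h1 : HasDerivAt (fun u => ∫ y in (0:ℝ)..u, f y) (f x) x :=
      intervalIntegral.integral_hasDerivAt_right (hf.intervalIntegrable)
        (hfc.stronglyMeasurable.stronglyMeasurableAtFilter) hfc.continuousAt
    have h2 : ∀ u, A u = (∫ y in Set.Iic (0:ℝ), f y) + ∫ y in (0:ℝ)..u, f y := by
      intro u
      rw [hA_def]
      rw [← intervalIntegral.integral_Iic_sub_Iic hf.integrableOn hf.integrableOn]
      ring
    exact (h1.const_add _).congr_of_eventuallyEq (Filter.Eventually.of_forall h2)
  have hB : ∀ x, HasDerivAt B (-(g x)) x := by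
    intro x
    have h1 : HasDerivAt (fun u => ∫ y in (0:ℝ)..u, g y) (g x) x :=
      intervalIntegral.integral_hasDerivAt_right (hg.intervalIntegrable)
        (hgc.stronglyMeasurable.stronglyMeasurableAtFilter) hgc.continuousAt
    have h2 : ∀ u, B u = (∫ y, g y) -
        ((∫ y in Set.Iic (0:ℝ), g y) + ∫ y in (0:ℝ)..u, g y) := by
      intro u
      show (∫ (y : ℝ) in Set.Ici u, g y) = _
      have h3 := intervalIntegral.integral_Iic_add_Ioi (hg.integrableOn (s := Set.Iic u))
        (hg.integrableOn (s := Set.Ioi u))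
      have h4 : (∫ y in Set.Iic u, g y) - (∫ y in Set.Iic (0:ℝ), g y) = ∫ y in (0:ℝ)..u, g y :=
        intervalIntegral.integral_Iic_sub_Iic hg.integrableOn hg.integrableOn
      rw [MeasureTheory.integral_Ici_eq_integral_Ioi]
      linear_combination h3 - h4
    have h5 : HasDerivAt (fun u => (∫ y, g y) -
        ((∫ y in Set.Iic (0:ℝ), g y) + ∫ y in (0:ℝ)..u, g y)) (-(g x)) x :=
      (h1.const_add (∫ y in Set.Iic (0:ℝ), g y)).const_sub _
    exact h5.congr_of_eventuallyEq (Filter.Eventually.of_forall h2)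
  set H : ℝ → ℂ := fun x => kJost x * A x + (starRingEnd ℂ) (kJost x) * B x with hH_def
  have hG' : ∀ x, G x = (1/12 : ℝ) * (H x).im := fun x => hG x
  have hconjk : ∀ x, HasDerivAt (fun y => (starRingEnd ℂ) (kJost y)) ((starRingEnd ℂ) (kd x)) x := by
    intro x
    simpa only [starRingEnd_apply] using (hasDerivAt_kJost x).star
  have hconjkd : ∀ x, HasDerivAt (fun y => (starRingEnd ℂ) (kd y)) ((starRingEnd ℂ) (kdd x)) x := by
    intro x
    simpa only [starRingEnd_apply] using (hasDerivAt_kd x).star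
  have hH : ∀ x, HasDerivAt H (kd x * A x + (starRingEnd ℂ) (kd x) * B x) x := by
    intro x
    have h := ((hasDerivAt_kJost x).mul (hA x)).add ((hconjk x).mul (hB x))
    have he : H = fun y => kJost y * A y + (starRingEnd ℂ) (kJost y) * B y := hH_def
    rw [he]
    refine h.congr_deriv ?_
    rw [hf_def, hg_def]
    ring
  have hHd : ∀ x, HasDerivAt (fun x => kd x * A x + (starRingEnd ℂ) (kd x) * B x)
      (kdd x * A x + (starRingEnd ℂ) (kdd x) * B x + 12 * Complex.I * (F x : ℂ)) x := by
    intro x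
    have h := ((hasDerivAt_kd x).mul (hA x)).add ((hconjkd x).mul (hB x))
    refine h.congr_deriv ?_
    have hw := wronskian x
    rw [hf_def, hg_def]
    linear_combination (F x : ℂ) * hw
  have hG1 : ∀ x, HasDerivAt G
      ((1/12 : ℝ) * ((kd x * A x + (starRingEnd ℂ) (kd x) * B x).im)) x := by
    intro x
    have h := (Complex.imCLM.hasFDerivAt.comp_hasDerivAt x (hH x)).const_mul (1/12 : ℝ)
    exact h.congr_of_eventuallyEq (Filter.Eventually.of_forall fun y => by rw [hG' y]; rfl)
  have hdG : deriv G = fun x => (1/12 : ℝ) * ((kd x * A x + (starRingEnd ℂ) (kd x) * B x).im) :=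
    funext fun x => (hG1 x).deriv
  have hG2 : ∀ x, HasDerivAt (deriv G)
      ((1/12 : ℝ) * ((kdd x * A x + (starRingEnd ℂ) (kdd x) * B x
        + 12 * Complex.I * (F x : ℂ)).im)) x := by
    intro x
    rw [hdG]
    exact (Complex.imCLM.hasFDerivAt.comp_hasDerivAt x (hHd x)).const_mul (1/12 : ℝ)
  have hAc : Continuous A := continuous_iff_continuousAt.2 fun x => (hA x).continuousAt
  have hBc : Continuous B := continuous_iff_continuousAt.2 fun x => (hB x).continuousAt
  refine ⟨?_, ?_, ?_⟩
  · -- boundedness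
    refine ⟨(3/2 : ℝ) * ∫ y, |F y|, fun x => ?_⟩
    set I0 : ℝ := ∫ y, |F y| with hI0_def
    have hnf : ∀ y, ‖f y‖ ≤ 3 * |F y| := by
      intro y
      rw [hf_def]
      calc ‖(starRingEnd ℂ) (kJost y) * ((F y : ℝ) : ℂ)‖
          = ‖kJost y‖ * |F y| := by
            rw [norm_mul, RCLike.norm_conj, Complex.norm_real, Real.norm_eq_abs]
        _ ≤ 3 * |F y| := mul_le_mul_of_nonneg_right (norm_kJost_le y) (abs_nonneg _)
    have hng : ∀ y, ‖g y‖ ≤ 3 * |F y| := by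
      intro y
      rw [hg_def]
      calc ‖kJost y * ((F y : ℝ) : ℂ)‖ = ‖kJost y‖ * |F y| := by
            rw [norm_mul, Complex.norm_real, Real.norm_eq_abs]
        _ ≤ 3 * |F y| := mul_le_mul_of_nonneg_right (norm_kJost_le y) (abs_nonneg _)
    have hint3 : Integrable (fun y => 3 * |F y|) := hF.abs.const_mul 3
    have hAb : ‖A x‖ ≤ 3 * I0 := by
      calc ‖A x‖ ≤ ∫ y in Set.Iic x, ‖f y‖ := norm_integral_le_integral_norm _
        _ ≤ ∫ y, ‖f y‖ := setIntegral_le_integral hf.norm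
            (Filter.Eventually.of_forall fun y => norm_nonneg _)
        _ ≤ ∫ y, 3 * |F y| := integral_mono hf.norm hint3 hnf
        _ = 3 * I0 := by rw [hI0_def, integral_const_mul]
    have hBb : ‖B x‖ ≤ 3 * I0 := by
      calc ‖B x‖ ≤ ∫ y in Set.Ici x, ‖g y‖ := norm_integral_le_integral_norm _
        _ ≤ ∫ y, ‖g y‖ := setIntegral_le_integral hg.norm
            (Filter.Eventually.of_forall fun y => norm_nonneg _)
        _ ≤ ∫ y, 3 * |F y| := integral_mono hg.norm hint3 hng
        _ = 3 * I0 := by rw [hI0_def, integral_const_mul]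
    have hHb : ‖H x‖ ≤ 18 * I0 := by
      calc ‖H x‖ ≤ ‖kJost x * A x‖ + ‖(starRingEnd ℂ) (kJost x) * B x‖ := norm_add_le _ _
        _ = ‖kJost x‖ * ‖A x‖ + ‖kJost x‖ * ‖B x‖ := by
            rw [norm_mul, norm_mul, RCLike.norm_conj]
        _ ≤ 3 * (3 * I0) + 3 * (3 * I0) := by
            have h0A := norm_nonneg (A x)
            have h0B := norm_nonneg (B x)
            have h0k := norm_nonneg (kJost x)
            have h3 := norm_kJost_le x
            nlinarith
        _ = 18 * I0 := by ring
    have him : |(H x).im| ≤ ‖H x‖ := by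
      exact Complex.abs_im_le_norm _
    rw [hG' x, abs_mul]
    have h12 : |(1/12 : ℝ)| = 1/12 := by norm_num
    rw [h12]
    nlinarith [him, hHb]
  · -- smoothness
    have h2 : (2 : WithTop ℕ∞) = 1 + 1 := by norm_num
    rw [h2, contDiff_succ_iff_deriv]
    refine ⟨fun x => (hG1 x).differentiableAt, ?_, ?_⟩
    · intro h
      simp at h
    · rw [contDiff_one_iff_deriv]
      refine ⟨fun x => (hG2 x).differentiableAt, ?_⟩
      have hdd : deriv (deriv G) = fun x => (1/12 : ℝ) *
          ((kdd x * A x + (starRingEnd ℂ) (kdd x) * B x + 12 * Complex.I * (F x : ℂ)).im) :=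
        funext fun x => (hG2 x).deriv
      rw [hdd]
      refine continuous_const.mul (Complex.continuous_im.comp ?_)
      refine Continuous.add (Continuous.add ?_ ?_) ?_
      · exact continuous_kdd.mul hAc
      · exact (continuous_star.comp continuous_kdd).mul hBc
      · exact continuous_const.mul (Complex.continuous_ofReal.comp hFcont)
  · -- the ODE
    intro x
    have hsq : sech (x / Real.sqrt 2) ^ 2 = Sq x := rfl
    rw [hsq]
    have e2 : deriv (deriv G) x = (1/12 : ℝ) *
        ((kdd x * A x + (starRingEnd ℂ) (kdd x) * B x + 12 * Complex.I * (F x : ℂ)).im) :=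
      (hG2 x).deriv
    have hconj : (starRingEnd ℂ) (kdd x)
        = -((4:ℂ) + 3 * ((Sq x : ℝ) : ℂ)) * (starRingEnd ℂ) (kJost x) := by
      rw [kdd_eq x]
      simp only [map_mul, map_neg, map_add, map_ofNat, Complex.conj_ofReal]
    have hc : -((4:ℂ) + 3 * ((Sq x : ℝ) : ℂ)) = ((-(4 + 3 * Sq x) : ℝ) : ℂ) := by
      push_cast; ring
    have him : (kdd x * A x + (starRingEnd ℂ) (kdd x) * B x + 12 * Complex.I * (F x : ℂ)).im
        = -(4 + 3 * Sq x) * (H x).im + 12 * F x := by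
      rw [hconj, kdd_eq x]
      have he : -((4:ℂ) + 3 * ((Sq x : ℝ) : ℂ)) * kJost x * A x
          + -((4:ℂ) + 3 * ((Sq x : ℝ) : ℂ)) * (starRingEnd ℂ) (kJost x) * B x
          + 12 * Complex.I * (F x : ℂ)
          = ((-(4 + 3 * Sq x) : ℝ) : ℂ) * (H x) + 12 * Complex.I * (F x : ℂ) := by
        rw [← hc, hH_def]
        ring
      rw [he]
      simp [Complex.add_im, Complex.mul_im, Complex.ofReal_re, Complex.ofReal_im,
        Complex.I_re, Complex.I_im, Complex.mul_re]
    rw [e2, him, hG' x]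
    ring
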